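/- Let R be a Noetherian local ring with maximal ideal m, M a finitely generated R-module, and x ∈ m a non-zerodivisor on M. If M/xM is free over R/(x), then M is free over R. -/

import Mathlib

open IsLocalRing Pointwise

/-- The `R ⧸ (x)`-module structure on `M ⧸ xM`. -/
noncomputable instance QuotSMulTop.instModuleQuotientSpanSingleton {R : Type*} [CommRing R]
    (x : R) (M : Type*) [AddCommGroup M] [Module R M] :
    Module (R ⧸ Ideal.span {x}) (QuotSMulTop x M) :=
  Module.IsTorsionBySet.module <| by
    rw [show ((Ideal.span {x} : Ideal R) : Set R) = ((R ∙ x : Submodule R R) : Set R) from rfl,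
      Module.isTorsionBySet_span_singleton_iff]
    intro m
    induction m using Submodule.Quotient.induction_on with
    | H y =>
      rw [← Submodule.Quotient.mk_smul, Submodule.Quotient.mk_eq_zero]
      exact Submodule.smul_mem_pointwise_smul y x ⊤ trivial

set_option maxHeartbeats 1000000 in
/-- If `x` is an `M`-regular element of the maximal ideal of a Noetherian local ring `R`
and `M/xM` is free over `R/(x)`, then `M` is free over `R`. -/
theorem free_of_quotSMulTop_free {R : Type*} [CommRing R] [IsLocalRing R] [IsNoetherianRing R]
    (M : Type*) [AddCommGroup M] [Module R M] [Module.Finite R M] {x : R}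
    (mem : x ∈ maximalIdeal R) (reg : IsSMulRegular M x)
    (free : Module.Free (R ⧸ Ideal.span {x}) (QuotSMulTop x M)) : Module.Free R M := by
  set I : Ideal R := Ideal.span {x} with hI
  have mk_smul : ∀ (r : R) (q : QuotSMulTop x M),
      (Ideal.Quotient.mk I r) • q = r • q := fun r q => rfl
  haveI : IsScalarTower R (R ⧸ I) (QuotSMulTop x M) := by
    constructor
    intro r s q
    obtain ⟨a, rfl⟩ := Ideal.Quotient.mk_surjective s
    rw [show r • (Ideal.Quotient.mk I a) = Ideal.Quotient.mk I (r * a) from rfl,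
      mk_smul, mk_smul, mul_smul]
  haveI : Module.Finite (R ⧸ I) (QuotSMulTop x M) :=
    Module.Finite.of_restrictScalars_finite R _ _
  let b := free.chooseBasis
  set ι := Module.Free.ChooseBasisIndex (R ⧸ I) (QuotSMulTop x M)
  let π : M →ₗ[R] QuotSMulTop x M := (x • ⊤ : Submodule R M).mkQ
  have hπ : Function.Surjective π := Submodule.mkQ_surjective _
  choose m hm using fun i => hπ (b i)
  have hIjac : I ≤ Ideal.jacobson ⊥ := by
    rw [IsLocalRing.jacobson_eq_maximalIdeal ⊥ bot_ne_top]
    rwa [hI, Ideal.span_le, Set.singleton_subset_iff]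
  let f : (ι →₀ R) →ₗ[R] M := Finsupp.linearCombination R m
  -- key compatibility fact
  have key : ∀ c : ι →₀ R, π (f c) =
      Finsupp.linearCombination (R ⧸ I) b (c.mapRange (Ideal.Quotient.mk I) (map_zero _)) := by
    intro c
    induction c using Finsupp.induction_linear with
    | zero => simp
    | add c₁ c₂ h1 h2 =>
        rw [map_add, map_add, h1, h2, Finsupp.mapRange_add (map_add _), map_add]
    | single i r =>
        simp only [f, Finsupp.linearCombination_single, map_smul,
          Finsupp.mapRange_single]
        rw [hm i, mk_smul]
  -- surjectivity
  have hrange : LinearMap.range f = ⊤ := by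
    rw [eq_top_iff]
    refine Submodule.le_of_le_smul_of_le_jacobson_bot Module.Finite.fg_top hIjac ?_
    have hspan : Submodule.span R (Set.range (π ∘ m)) = ⊤ := by
      have : Submodule.span (R ⧸ I) (Set.range (π ∘ m)) = ⊤ := by
        have : (π ∘ m) = ⇑b := funext fun i => hm i
        rw [this, b.span_eq]
      rw [← Submodule.restrictScalars_span R (R ⧸ I) Ideal.Quotient.mk_surjective, this]
      rfl
    have hmap : Submodule.map π (LinearMap.range f) = ⊤ := by
      rw [Finsupp.range_linearCombination, ← Submodule.span_image, ← Set.range_comp, hspan]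
    rw [Submodule.map_mkQ_eq_top] at hmap
    rw [← Submodule.ideal_span_singleton_smul x (⊤ : Submodule R M), ← hI] at hmap
    exact hmap.symm.trans_le (sup_le le_sup_right le_sup_left)
  -- injectivity
  have hker : LinearMap.ker f = ⊥ := by
    refine Submodule.eq_bot_of_le_smul_of_le_jacobson_bot I _
      (IsNoetherian.noetherian _) ?_ hIjac
    intro c hc
    have hfc : f c = 0 := hc
    have h0 : Finsupp.linearCombination (R ⧸ I) b
        (c.mapRange (Ideal.Quotient.mk I) (map_zero _)) = 0 := by
      rw [← key, hfc, map_zero]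
    have hc0 := linearIndependent_iff.mp b.linearIndependent _ h0
    have hmem : ∀ i, x ∣ c i := fun i => by
      have : Ideal.Quotient.mk I (c i) = 0 := by
        have := congrFun (congrArg (fun (g : ι →₀ R ⧸ I) => ⇑g) hc0) i
        simpa [Finsupp.mapRange_apply] using this
      exact Ideal.mem_span_singleton.mp (Ideal.Quotient.eq_zero_iff_mem.mp this)
    choose g hg using hmem
    haveI : Fintype ι := Module.Free.ChooseBasisIndex.fintype _ _
    let d : ι →₀ R := Finsupp.equivFunOnFinite.symm g
    have hcd : c = x • d := by
      ext i
      simp only [d, Finsupp.smul_apply, Finsupp.equivFunOnFinite_symm_apply_apply,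
        smul_eq_mul]
      exact hg i
    have hd : d ∈ LinearMap.ker f := by
      rw [LinearMap.mem_ker]
      refine reg ?_
      show x • f d = x • 0
      rw [smul_zero, ← map_smul, ← hcd]
      exact hfc
    rw [hcd]
    exact Submodule.smul_mem_smul (Ideal.mem_span_singleton_self x) hd
  exact Module.Free.of_equiv (LinearEquiv.ofBijective f
    ⟨LinearMap.ker_eq_bot.mp hker, LinearMap.range_eq_top.mp hrange⟩)
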